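/- For every integer n' ≥ 1 and every real number p with 1/(2n') ≤ p ≤ 1/n', one has n'·p·(1−p)^{n'−1} ≥ 1/(2e). (This is the key success-probability bound for one round of the decay protocol: if n' stations each transmit independently with probability p, the probability that exactly one transmits is n'·p·(1−p)^{n'−1}.) -/

import Mathlib

/-- For every integer `n' ≥ 1` and every real `p` with `1/(2n') ≤ p ≤ 1/n'`,
the probability `n'·p·(1−p)^{n'−1}` that exactly one of `n'` stations transmits
is at least `1/(2e)`. -/
theorem decay_success_probability (n' : ℕ) (hn : 1 ≤ n') (p : ℝ)
    (hp₁ : 1 / (2 * (n' : ℝ)) ≤ p) (hp₂ : p ≤ 1 / (n' : ℝ)) :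
    1 / (2 * Real.exp 1) ≤ (n' : ℝ) * p * (1 - p) ^ (n' - 1) := by
  have hN0 : (0:ℝ) < (n' : ℝ) := by exact_mod_cast hn
  have hp0 : 0 < p := lt_of_lt_of_le (by positivity) hp₁
  have hNp : (n' : ℝ) * p ≤ 1 := by
    rw [le_div_iff₀ hN0] at hp₂; nlinarith
  have hhalf : (1:ℝ)/2 ≤ (n' : ℝ) * p := by
    rw [div_le_iff₀ (by positivity)] at hp₁; nlinarith
  rcases eq_or_lt_of_le hn with h1 | h2
  · -- n' = 1
    have : n' = 1 := h1.symm
    subst this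
    simp only [Nat.cast_one, one_mul, Nat.sub_self, pow_zero, mul_one]
    have he : 1 ≤ Real.exp 1 := Real.one_le_exp (by norm_num)
    have : (1:ℝ)/(2 * Real.exp 1) ≤ 1/2 := by
      apply div_le_div_of_nonneg_left (by norm_num) (by norm_num) (by linarith)
    calc (1:ℝ)/(2*Real.exp 1) ≤ 1/2 := this
      _ ≤ p := by linarith
  · -- n' ≥ 2
    have hN2 : (2:ℝ) ≤ (n' : ℝ) := by exact_mod_cast h2
    have h1p : 0 < 1 - p := by
      have : p ≤ 1/2 := le_trans hp₂ (by rw [div_le_div_iff₀ hN0 (by norm_num)]; linarith)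
      linarith
    set x := p / (1 - p) with hx
    have hx0 : 0 ≤ x := le_of_lt (div_pos hp0 h1p)
    have hexp : Real.exp (-x) ≤ 1 - p := by
      have h1 : (1:ℝ)/(1-p) ≤ Real.exp x := by
        have := Real.add_one_le_exp x
        have : 1 + x ≤ Real.exp x := by linarith
        calc (1:ℝ)/(1-p) = 1 + x := by rw [hx]; field_simp; ring
          _ ≤ Real.exp x := this
      rw [Real.exp_neg]
      rw [one_div] at h1
      calc (Real.exp x)⁻¹ ≤ ((1-p)⁻¹)⁻¹ := by
            apply inv_anti₀ (inv_pos.mpr h1p) h1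
        _ = 1 - p := inv_inv _
    have hmx : ((n' - 1 : ℕ) : ℝ) * x ≤ 1 := by
      have hcast : ((n' - 1 : ℕ) : ℝ) = (n' : ℝ) - 1 := by
        have := Nat.cast_sub hn (R := ℝ); simpa using this
      rw [hcast, hx, ← mul_div_assoc, div_le_one h1p]
      nlinarith
    have hpow : Real.exp (-1) ≤ (1 - p) ^ (n' - 1) := by
      calc Real.exp (-1) ≤ Real.exp (((n'-1:ℕ):ℝ) * (-x)) := by
            apply Real.exp_le_exp.mpr; nlinarith
        _ = Real.exp (-x) ^ (n' - 1) := Real.exp_nat_mul _ _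
        _ ≤ (1 - p) ^ (n' - 1) := by
            apply pow_le_pow_left₀ (Real.exp_nonneg _) hexp
    have hkey : (1:ℝ)/2 * Real.exp (-1) ≤ (n' : ℝ) * p * (1 - p) ^ (n' - 1) := by
      apply mul_le_mul hhalf hpow (Real.exp_nonneg _) (by positivity)
    have : (1:ℝ)/2 * Real.exp (-1) = 1 / (2 * Real.exp 1) := by
      rw [Real.exp_neg]; field_simp
    linarith
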